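/- Let X be a complex inner product space with inner product ⟪·|·⟫ and let n be a natural number. Then the following are equivalent: (1) there exists an orthonormal system {x₁, …, xₙ} ⊆ X of n vectors; (2) there exist n vectors v₁, …, vₙ ∈ X that are linearly independent over ℝ and such that all pairwise inner products ⟪v_j|v_k⟫ (1 ≤ j, k ≤ n) are real numbers. -/

import Mathlib

lemma aux_sum_zero {X : Type*} [NormedAddCommGroup X] [InnerProductSpace ℂ X] {n : ℕ}
    {v : Fin n → X} (him : ∀ j k : Fin n, ((inner ℂ (v j) (v k) : ℂ)).im = 0)
    (c : Fin n → ℝ) (hc : ∀ k : Fin n, ∑ j, c j * ((inner ℂ (v k) (v j) : ℂ)).re = 0) :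
    ∑ j, c j • v j = 0 := by
  have hinner : ∀ k : Fin n, (inner ℂ (v k) (∑ j, c j • v j) : ℂ) = 0 := by
    intro k
    rw [inner_sum]
    have : ∀ j, (inner ℂ (v k) ((c j) • v j) : ℂ) = ((c j * ((inner ℂ (v k) (v j) : ℂ)).re : ℝ) : ℂ) := by
      intro j
      rw [RCLike.real_smul_eq_coe_smul (K := ℂ), inner_smul_right]
      have h2 : (inner ℂ (v k) (v j) : ℂ) = (((inner ℂ (v k) (v j) : ℂ)).re : ℂ) := by
        exact (Complex.re_add_im _).symm.trans (by rw [him k j]; simp)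
      rw [h2]
      push_cast
      simp
    simp_rw [this]
    rw [← Complex.ofReal_sum]
    rw [hc k]
    simp
  have h0 : (inner ℂ (∑ j, c j • v j) (∑ j, c j • v j) : ℂ) = 0 := by
    rw [sum_inner]
    apply Finset.sum_eq_zero
    intro k _
    rw [RCLike.real_smul_eq_coe_smul (K := ℂ), inner_smul_left, hinner k, mul_zero]
  exact inner_self_eq_zero.mp h0

lemma aux_li {X : Type*} [NormedAddCommGroup X] [InnerProductSpace ℂ X] {n : ℕ}
    {v : Fin n → X} (hli : LinearIndependent ℝ v)
    (him : ∀ j k : Fin n, ((inner ℂ (v j) (v k) : ℂ)).im = 0) :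
    LinearIndependent ℂ v := by
  rw [Fintype.linearIndependent_iff]
  intro g hg i
  have hinner : ∀ k : Fin n, ∑ j, g j * (inner ℂ (v k) (v j) : ℂ) = 0 := by
    intro k
    have := congrArg (fun w => (inner ℂ (v k) w : ℂ)) hg
    simpa [inner_sum, inner_smul_right] using this
  have hre : ∀ k : Fin n, ∑ j, (g j).re * ((inner ℂ (v k) (v j) : ℂ)).re = 0 := by
    intro k
    have := congrArg Complex.re (hinner k)
    rw [Complex.re_sum] at this
    simpa [Complex.mul_re, him k] using this
  have himp : ∀ k : Fin n, ∑ j, (g j).im * ((inner ℂ (v k) (v j) : ℂ)).re = 0 := by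
    intro k
    have := congrArg Complex.im (hinner k)
    rw [Complex.im_sum] at this
    simpa [Complex.mul_im, him k] using this
  have hlir := Fintype.linearIndependent_iff.mp hli
  have h1 : ∀ j, (g j).re = 0 := hlir _ (aux_sum_zero him _ hre)
  have h2 : ∀ j, (g j).im = 0 := hlir _ (aux_sum_zero him _ himp)
  exact Complex.ext (h1 i) (h2 i)

/-- in a complex inner product space, there is an orthonormal system of `n` vectors
iff there are `n` vectors, linearly independent over `ℝ`, all of whose pairwise inner products are
real. -/
theorem stmt17 {X : Type*} [NormedAddCommGroup X] [InnerProductSpace ℂ X] (n : ℕ) :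
    (∃ x : Fin n → X, Orthonormal ℂ x) ↔
    (∃ v : Fin n → X, LinearIndependent ℝ v ∧
      ∀ j k : Fin n, ((inner ℂ (v j) (v k) : ℂ)).im = 0) := by
  constructor
  · rintro ⟨x, hx⟩
    refine ⟨x, ?_, ?_⟩
    · exact hx.linearIndependent.restrict_scalars
        (by intro a b h; simpa using h)
    · intro j k
      have := orthonormal_iff_ite.mp hx j k
      rw [this]
      split <;> simp
  · rintro ⟨v, hli, him⟩
    have hC : LinearIndependent ℂ v := aux_li hli him
    rcases n with _ | m
    · exact ⟨finZeroElim, ⟨fun i => i.elim0, fun i => i.elim0⟩⟩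
    · haveI : WellFoundedLT (Fin (m + 1)) := inferInstance
      exact ⟨InnerProductSpace.gramSchmidtNormed ℂ v, InnerProductSpace.gramSchmidtNormed_orthonormal (𝕜 := ℂ) hC⟩
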